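/- If M →h N under weak call-by-name reduction, t is a canonical closed Ψ-term and ⟦t⟧_w = M, then t rewrites in one step in Ψ to a term u with ⟦u⟧_w = N and #app(u) + 1 ≥ #app(t), where #app(·) counts occurrences of the function symbol app. -/

import Mathlib

/-- Untyped λ-terms over variables drawn from ℕ (a denumerable totally ordered set). -/
inductive Lam : Type
  | var : ℕ → Lam
  | lam : ℕ → Lam → Lam
  | app : Lam → Lam → Lam
deriving DecidableEq, Repr

namespace Lam

/-- Capture-permitting substitution M{N/x} (adequate for weak reduction of closed terms). -/
def subst : Lam → ℕ → Lam → Lam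
  | var y, x, N => if y = x then N else var y
  | lam y M, x, N => if y = x then lam y M else lam y (subst M x N)
  | app M₁ M₂, x, N => app (subst M₁ x N) (subst M₂ x N)

/-- Simultaneous substitution along a partial assignment of terms to variables. -/
def msubst : Lam → (ℕ → Option Lam) → Lam
  | var y, σ => (σ y).getD (var y)
  | lam y M, σ => lam y (msubst M (fun z => if z = y then none else σ z))
  | app M₁ M₂, σ => app (msubst M₁ σ) (msubst M₂ σ)

/-- The assignment sending each `xᵢ` to `tᵢ` (first match wins). -/
def substOf (xs : List ℕ) (ts : List Lam) : ℕ → Option Lam :=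
  fun y => (xs.zip ts).lookup y

/-- Values: variables and abstractions. -/
def IsValue : Lam → Prop
  | var _ => True
  | lam _ _ => True
  | app _ _ => False

/-- Weak call-by-value reduction. -/
inductive CbvStep : Lam → Lam → Prop
  | beta {x : ℕ} {M V : Lam} : IsValue V → CbvStep (app (lam x M) V) (subst M x V)
  | appL {M N L : Lam} : CbvStep M N → CbvStep (app M L) (app N L)
  | appR {M N L : Lam} : CbvStep M N → CbvStep (app L M) (app L N)

/-- A →v-normal form. -/
def CbvNormal (M : Lam) : Prop := ¬ ∃ N, CbvStep M N

/-- Free variables, as a finite set. -/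
def fv : Lam → Finset ℕ
  | var x => {x}
  | lam x M => fv M \ {x}
  | app M N => fv M ∪ fv N

/-- The sequence (without repetitions, in variable order) of free variables of `M`. -/
def fvList (M : Lam) : List ℕ := (fv M).sort (· ≤ ·)

def Closed (M : Lam) : Prop := fv M = ∅

/-- The size |M| of a λ-term. -/
def size : Lam → ℕ
  | var _ => 1
  | lam _ M => size M + 1
  | app M N => size M + size N + 1

end Lam

/-- `NSteps r n a b`: `a` reduces to `b` in exactly `n` `r`-steps. -/
def NSteps {α : Type*} (r : α → α → Prop) : ℕ → α → α → Prop
  | 0 => fun a b => a = b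
  | n + 1 => fun a c => ∃ b, r a b ∧ NSteps r n b c

/-- Weak call-by-name reduction →h. -/
inductive CbnStep : Lam → Lam → Prop
  | beta {x : ℕ} {M N : Lam} : CbnStep (Lam.app (Lam.lam x M) N) (Lam.subst M x N)
  | appL {M M' L : Lam} : CbnStep M M' → CbnStep (Lam.app M L) (Lam.app M' L)

/-- Terms of the constructor rewrite system Ψ: variables, the binary function
symbol `app`, the binary constructor `capp`, and for every λ-term `M` and variable
`x` a constructor `c_{x,M}` (here `con x M`) of arity the length of FV(λx.M). -/
inductive QTerm : Type
  | var : ℕ → QTerm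
  | app : QTerm → QTerm → QTerm
  | capp : QTerm → QTerm → QTerm
  | con : ℕ → Lam → List QTerm → QTerm

namespace QTerm

/-- Well-formed Ψ-terms: arities are respected. -/
inductive WFQ : QTerm → Prop
  | var {x} : WFQ (var x)
  | app {u v} : WFQ u → WFQ v → WFQ (app u v)
  | capp {u v} : WFQ u → WFQ v → WFQ (capp u v)
  | con {x M ts} : ts.length = (Lam.fvList (Lam.lam x M)).length →
      (∀ t ∈ ts, WFQ t) → WFQ (con x M ts)

/-- Constructor terms of Ψ: built only from `capp` and the `c_{x,M}`. -/
inductive IsConTermQ : QTerm → Prop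
  | capp {u v} : IsConTermQ u → IsConTermQ v → IsConTermQ (capp u v)
  | con {x M ts} : (∀ t ∈ ts, IsConTermQ t) → IsConTermQ (con x M ts)

/-- Closed Ψ-terms: no variables. -/
inductive ClosedQ : QTerm → Prop
  | app {u v} : ClosedQ u → ClosedQ v → ClosedQ (app u v)
  | capp {u v} : ClosedQ u → ClosedQ v → ClosedQ (capp u v)
  | con {x M ts} : (∀ t ∈ ts, ClosedQ t) → ClosedQ (con x M ts)

/-- Canonical closed Ψ-terms: either a constructor term of the form
c_{x,M}(t₁,…,tₙ), or app(u,v) with u canonical and v a constructor term. -/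
inductive CanonicalQ : QTerm → Prop
  | con {x M ts} : (∀ t ∈ ts, IsConTermQ t) → CanonicalQ (con x M ts)
  | app {u v} : CanonicalQ u → IsConTermQ v → CanonicalQ (app u v)

/-- Substitution of Ψ-terms for variables. -/
def qsubst (σ : ℕ → Option QTerm) : QTerm → QTerm
  | var y => (σ y).getD (var y)
  | app u v => app (qsubst σ u) (qsubst σ v)
  | capp u v => capp (qsubst σ u) (qsubst σ v)
  | con x M ts => con x M (ts.attach.map (fun t => qsubst σ t.1))
decreasing_by
  all_goals simp_wf
  all_goals try have := List.sizeOf_lt_of_mem t.2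
  all_goals omega

/-- The assignment sending each `xᵢ` to `tᵢ`. -/
def substOfQ (xs : List ℕ) (ts : List QTerm) : ℕ → Option QTerm :=
  fun y => (xs.zip ts).lookup y

/-- The number of occurrences of the function symbol `app` in a Ψ-term. -/
def countApp : QTerm → ℕ
  | var _ => 0
  | app u v => countApp u + countApp v + 1
  | capp u v => countApp u + countApp v
  | con _ _ ts => (ts.attach.map (fun t => countApp t.1)).sum
decreasing_by
  all_goals simp_wf
  all_goals try have := List.sizeOf_lt_of_mem t.2
  all_goals omega

end QTerm

/-- The auxiliary translation ⟨·⟩'_w from λ-terms to Ψ-constructor terms. -/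
def transW' : Lam → QTerm
  | .var x => .var x
  | .lam x M => .con x M ((Lam.fvList (.lam x M)).map .var)
  | .app M N => .capp (transW' M) (transW' N)

/-- The translation ⟨·⟩_w from λ-terms to Ψ-terms. -/
def transW : Lam → QTerm
  | .var x => .var x
  | .lam x M => .con x M ((Lam.fvList (.lam x M)).map .var)
  | .app M N => .app (transW M) (transW' N)

/-- The readback ⟦·⟧_w from Ψ-terms to λ-terms. -/
def readbackW : QTerm → Lam
  | .var x => .var x
  | .app u v => .app (readbackW u) (readbackW v)
  | .capp u v => .app (readbackW u) (readbackW v)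
  | .con x M ts =>
      Lam.msubst (.lam x M)
        (Lam.substOf (Lam.fvList (.lam x M)) (ts.attach.map (fun t => readbackW t.1)))
decreasing_by
  all_goals simp_wf
  all_goals try have := List.sizeOf_lt_of_mem t.2
  all_goals omega

/-- One-step rewriting in Ψ: the five families of ordinary rules and the
administrative rule, with matched variables instantiated by constructor terms,
closed under arbitrary contexts. -/
inductive PsiStep : QTerm → QTerm → Prop
  | id_capp {z : ℕ} {w f : QTerm} :
      QTerm.IsConTermQ w → QTerm.IsConTermQ f →
      PsiStep (.app (.con z (.var z) []) (.capp w f)) (.app w f)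
  | id_con {z x : ℕ} {M : Lam} {ts : List QTerm} :
      (∀ t ∈ ts, QTerm.IsConTermQ t) →
      ts.length = (Lam.fvList (.lam x M)).length →
      PsiStep (.app (.con z (.var z) []) (.con x M ts)) (.con x M ts)
  | proj_capp {z w : ℕ} {f g h : QTerm} :
      w ≠ z → QTerm.IsConTermQ f → QTerm.IsConTermQ g → QTerm.IsConTermQ h →
      PsiStep (.app (.con z (.var w) [.capp f g]) h) (.app f g)
  | proj_con {z w x : ℕ} {M : Lam} {ts : List QTerm} {h : QTerm} :
      w ≠ z → (∀ t ∈ ts, QTerm.IsConTermQ t) →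
      ts.length = (Lam.fvList (.lam x M)).length →
      QTerm.IsConTermQ h →
      PsiStep (.app (.con z (.var w) [.con x M ts]) h) (.con x M ts)
  | beta {y : ℕ} {N : Lam} {ts : List QTerm} {v : QTerm} :
      (∀ z : ℕ, N ≠ .var z) →
      (∀ t ∈ ts, QTerm.IsConTermQ t) → QTerm.IsConTermQ v →
      ts.length = (Lam.fvList (.lam y N)).length →
      PsiStep (.app (.con y N ts) v)
        (QTerm.qsubst (QTerm.substOfQ (Lam.fvList (.lam y N) ++ [y]) (ts ++ [v]))
          (transW N))
  | adm {a b c : QTerm} :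
      QTerm.IsConTermQ a → QTerm.IsConTermQ b → QTerm.IsConTermQ c →
      PsiStep (.app (.capp a b) c) (.app (.app a b) c)
  | appL {u u' v} : PsiStep u u' → PsiStep (.app u v) (.app u' v)
  | appR {u v v'} : PsiStep v v' → PsiStep (.app u v) (.app u v')
  | cappL {u u' v} : PsiStep u u' → PsiStep (.capp u v) (.capp u' v)
  | cappR {u v v'} : PsiStep v v' → PsiStep (.capp u v) (.capp u v')
  | conArg {x M ts₁ t t' ts₂} : PsiStep t t' →
      PsiStep (.con x M (ts₁ ++ t :: ts₂)) (.con x M (ts₁ ++ t' :: ts₂))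


namespace Lam

lemma subst_not_mem {M : Lam} {y : ℕ} (h : y ∉ fv M) (V : Lam) : subst M y V = M := by
  induction M with
  | var z => simp [fv] at h; simp [subst, Ne.symm h]
  | lam z M ih =>
      by_cases hzy : z = y
      · simp [subst, hzy]
      · simp [fv, Finset.mem_sdiff] at h
        simp [subst, hzy, ih (fun hm => by simp [h hm] at hzy)]
  | app M₁ M₂ ih₁ ih₂ =>
      simp [fv] at h
      simp [subst, ih₁ h.1, ih₂ h.2]

lemma msubst_congr : ∀ {M : Lam} {σ σ' : ℕ → Option Lam},
    (∀ z ∈ fv M, (σ z).getD (var z) = (σ' z).getD (var z)) → msubst M σ = msubst M σ'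
  | var z, σ, σ', h => by simpa [msubst, fv] using h z (by simp [fv])
  | lam y M, σ, σ', h => by
      simp only [msubst]
      congr 1
      refine msubst_congr (fun z hz => ?_)
      by_cases hzy : z = y
      · simp [hzy]
      · simpa [hzy] using h z (by simp [fv, hz, hzy])
  | app M₁ M₂, σ, σ', h => by
      simp only [msubst]
      rw [msubst_congr (fun z hz => h z (by simp [fv, hz])),
        msubst_congr (fun z hz => h z (by simp [fv, hz]))]

lemma msubst_none : ∀ (M : Lam), msubst M (fun _ => none) = M
  | var z => by simp [msubst]
  | lam y M => by
      simp only [msubst]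
      rw [msubst_congr (σ' := fun _ => none) (by intro z hz; by_cases h : z = y <;> simp [h]),
        msubst_none M]
  | app M₁ M₂ => by simp [msubst, msubst_none M₁, msubst_none M₂]

lemma msubst_id {M : Lam} {σ : ℕ → Option Lam}
    (h : ∀ z ∈ fv M, (σ z).getD (var z) = var z) : msubst M σ = M := by
  rw [msubst_congr (σ' := fun _ => none) (by simpa using h), msubst_none]

lemma mem_fv_msubst : ∀ {M : Lam} {σ : ℕ → Option Lam} {w : ℕ},
    w ∈ fv (msubst M σ) → ∃ z ∈ fv M, w ∈ fv ((σ z).getD (var z))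
  | var z, σ, w, h => ⟨z, by simp [fv], by simpa [msubst] using h⟩
  | lam y M, σ, w, h => by
      simp only [msubst, fv, Finset.mem_sdiff, Finset.mem_singleton] at h
      obtain ⟨h1, hwy⟩ := h
      obtain ⟨z, hz, hw⟩ := mem_fv_msubst h1
      by_cases hzy : z = y
      · simp [hzy, fv] at hw; omega
      · exact ⟨z, by simp [fv, hz, hzy], by simpa [hzy] using hw⟩
  | app M₁ M₂, σ, w, h => by
      simp only [msubst, fv, Finset.mem_union] at h
      rcases h with h | h
      · obtain ⟨z, hz, hw⟩ := mem_fv_msubst h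
        exact ⟨z, by simp [fv, hz], hw⟩
      · obtain ⟨z, hz, hw⟩ := mem_fv_msubst h
        exact ⟨z, by simp [fv, hz], hw⟩

lemma subst_msubst : ∀ {M : Lam} {σ : ℕ → Option Lam} {y : ℕ} {V : Lam},
    (∀ z t, σ z = some t → fv t = ∅) → σ y = none →
    subst (msubst M σ) y V = msubst M (fun z => if z = y then some V else σ z)
  | var z, σ, y, V, hcl, hy => by
      rcases hσ : σ z with _ | t
      · by_cases hzy : z = y
        · subst hzy; simp [msubst, hσ, subst]
        · simp [msubst, hσ, subst, hzy]
      · have hzy : z ≠ y := fun h => by rw [h, hy] at hσ; cases hσ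
        have ht : t.subst y V = t := subst_not_mem (by simp [hcl z t hσ]) V
        simp [msubst, hσ, ht, hzy]
  | lam w M, σ, y, V, hcl, hy => by
      by_cases hwy : w = y
      · subst hwy
        simp only [msubst, subst, if_pos rfl, if_true, lam.injEq, true_and]
        refine msubst_congr (fun z hz => ?_)
        by_cases hzw : z = w <;> simp [hzw, hy]
      · simp only [msubst, subst, if_neg hwy, lam.injEq, true_and]
        rw [subst_msubst (fun z t h => by
              by_cases hzw : z = w
              · simp [hzw] at h
              · exact hcl z t (by simpa [hzw] using h))
            (by simp [hwy, hy])]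
        refine msubst_congr (fun z hz => ?_)
        by_cases hzy : z = y
        · subst hzy
          simp [show z ≠ w from fun h => hwy h.symm]
        · by_cases hzw : z = w <;> simp [hzy, hzw, hwy]
  | app M₁ M₂, σ, y, V, hcl, hy => by
      simp [msubst, subst, subst_msubst hcl hy, subst_msubst hcl hy]

lemma mem_fvList {M : Lam} {z : ℕ} : z ∈ fvList M ↔ z ∈ fv M := Finset.mem_sort _

end Lam

section ListLemmas

variable {α β γ : Type*} [DecidableEq α]

lemma lookup_zip_map_self (h : α → β) :
    ∀ (xs : List α) (z : α),
      (xs.zip (xs.map h)).lookup z = if z ∈ xs then some (h z) else none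
  | [], z => by simp
  | x :: xs, z => by
      by_cases hzx : z = x
      · simp [hzx, List.lookup_cons]
      · simp [List.lookup_cons, beq_false_of_ne hzx, lookup_zip_map_self h xs z, hzx]

lemma lookup_zip_map (f : β → γ) : ∀ (xs : List α) (ts : List β) (z : α),
    (xs.zip (ts.map f)).lookup z = ((xs.zip ts).lookup z).map f
  | [], ts, z => by simp
  | x :: xs, [], z => by simp
  | x :: xs, t :: ts, z => by
      by_cases hzx : z = x
      · simp [hzx, List.lookup_cons]
      · simp [List.lookup_cons, beq_false_of_ne hzx, lookup_zip_map f xs ts z]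

lemma lookup_append (z : α) : ∀ (l₁ l₂ : List (α × β)),
    (l₁ ++ l₂).lookup z = ((l₁.lookup z).or (l₂.lookup z))
  | [], l₂ => by simp
  | p :: l₁, l₂ => by
      obtain ⟨a, b⟩ := p
      by_cases hzp : z = a
      · subst hzp; simp [List.lookup_cons]
      · simp [List.lookup_cons, beq_false_of_ne hzp, lookup_append z l₁ l₂]

lemma lookup_zip_mem : ∀ {xs : List α} {ws : List β} {z : α}, z ∈ xs →
    xs.length = ws.length → ∃ w ∈ ws, (xs.zip ws).lookup z = some w
  | [], ws, z, hz, _ => by simp at hz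
  | x :: xs, [], z, hz, hl => by simp at hl
  | x :: xs, w :: ws, z, hz, hl => by
      by_cases hzx : z = x
      · exact ⟨w, by simp, by simp [hzx, List.lookup_cons]⟩
      · have hz' : z ∈ xs := by rcases List.mem_cons.1 hz with h | h; exact absurd h hzx; exact h
        obtain ⟨w', hw', hlk⟩ := lookup_zip_mem hz' (by simpa using hl)
        exact ⟨w', by simp [hw'], by simp [List.lookup_cons, beq_false_of_ne hzx, hlk]⟩

lemma lookup_zip_none : ∀ {xs : List α} (ws : List β) {z : α}, z ∉ xs →
    (xs.zip ws).lookup z = none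
  | [], ws, z, hz => by simp
  | x :: xs, [], z, hz => by simp
  | x :: xs, w :: ws, z, hz => by
      simp only [List.mem_cons, not_or] at hz
      simp [List.lookup_cons, beq_false_of_ne hz.1, lookup_zip_none ws hz.2]

lemma lookup_zip_mem_of_eq {xs : List α} {ws : List β} {z : α} {w : β}
    (h : (xs.zip ws).lookup z = some w) : w ∈ ws := by
  obtain ⟨l₁, l₂, heq, -⟩ := List.lookup_eq_some_iff.1 h
  have : (z, w) ∈ xs.zip ws := by rw [heq]; simp
  exact (List.of_mem_zip this).2

end ListLemmas

namespace QTerm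

lemma qsubst_con (σ : ℕ → Option QTerm) (x : ℕ) (M : Lam) (ts : List QTerm) :
    qsubst σ (.con x M ts) = .con x M (ts.map (qsubst σ)) := by
  rw [qsubst]; simp [List.attach_map_val]

lemma countApp_con (x : ℕ) (M : Lam) (ts : List QTerm) :
    countApp (.con x M ts) = (ts.map countApp).sum := by
  rw [countApp]; simp [List.attach_map_val]

lemma countApp_conterm : ∀ {t : QTerm}, IsConTermQ t → countApp t = 0
  | _, .capp hu hv => by simp [countApp, countApp_conterm hu, countApp_conterm hv]
  | .con x M ts, .con hts => by
      rw [countApp_con]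
      refine List.sum_eq_zero ?_
      intro n hn
      simp only [List.mem_map] at hn
      obtain ⟨t, ht, rfl⟩ := hn
      exact countApp_conterm (hts t ht)
decreasing_by
  all_goals simp_wf
  all_goals try have := List.sizeOf_lt_of_mem ht
  all_goals omega

end QTerm

lemma readbackW_con (x : ℕ) (M : Lam) (ts : List QTerm) :
    readbackW (.con x M ts) =
      Lam.msubst (.lam x M) (Lam.substOf (Lam.fvList (.lam x M)) (ts.map readbackW)) := by
  rw [readbackW]; simp [List.attach_map_val]

lemma qsubst_var (σ : ℕ → Option QTerm) (y : ℕ) :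
    QTerm.qsubst σ (.var y) = (σ y).getD (.var y) := by rw [QTerm.qsubst]

lemma qsubst_capp (σ : ℕ → Option QTerm) (u v : QTerm) :
    QTerm.qsubst σ (.capp u v) = .capp (QTerm.qsubst σ u) (QTerm.qsubst σ v) := by
  rw [QTerm.qsubst]

lemma qsubst_app (σ : ℕ → Option QTerm) (u v : QTerm) :
    QTerm.qsubst σ (.app u v) = .app (QTerm.qsubst σ u) (QTerm.qsubst σ v) := by
  rw [QTerm.qsubst]

lemma readbackW_var (x : ℕ) : readbackW (.var x) = .var x := by rw [readbackW]

lemma readbackW_app (u v : QTerm) :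
    readbackW (.app u v) = .app (readbackW u) (readbackW v) := by rw [readbackW]

lemma readbackW_capp (u v : QTerm) :
    readbackW (.capp u v) = .app (readbackW u) (readbackW v) := by rw [readbackW]

lemma readback_qsubst_con (τ : ℕ → Option QTerm) (x : ℕ) (M : Lam) :
    readbackW (QTerm.qsubst τ (.con x M ((Lam.fvList (.lam x M)).map .var))) =
      Lam.msubst (.lam x M) (fun z => (τ z).map readbackW) := by
  rw [QTerm.qsubst_con, readbackW_con]
  simp only [List.map_map]
  refine Lam.msubst_congr (fun z hz => ?_)
  have hzl : z ∈ Lam.fvList (.lam x M) := Lam.mem_fvList.2 hz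
  unfold Lam.substOf
  rw [lookup_zip_map_self, if_pos hzl]
  simp only [Function.comp]
  rw [qsubst_var]
  rcases τ z with _ | s
  · simp [readbackW_var]
  · simp

lemma readback_qsubst_transW' : ∀ (M : Lam) (τ : ℕ → Option QTerm),
    readbackW (QTerm.qsubst τ (transW' M)) = Lam.msubst M (fun z => (τ z).map readbackW)
  | .var y, τ => by
      rw [transW', qsubst_var]
      rcases hτ : τ y with _ | s <;> simp [readbackW_var, Lam.msubst, hτ]
  | .lam x M, τ => readback_qsubst_con τ x M
  | .app M N, τ => by
      rw [transW', qsubst_capp, readbackW_capp, Lam.msubst,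
        readback_qsubst_transW' M τ, readback_qsubst_transW' N τ]

lemma readback_qsubst_transW : ∀ (M : Lam) (τ : ℕ → Option QTerm),
    readbackW (QTerm.qsubst τ (transW M)) = Lam.msubst M (fun z => (τ z).map readbackW)
  | .var y, τ => by
      rw [transW, qsubst_var]
      rcases hτ : τ y with _ | s <;> simp [readbackW_var, Lam.msubst, hτ]
  | .lam x M, τ => readback_qsubst_con τ x M
  | .app M N, τ => by
      rw [transW, qsubst_app, readbackW_app, Lam.msubst,
        readback_qsubst_transW M τ, readback_qsubst_transW' N τ]

lemma fv_readback_eq_empty {t : QTerm} (hwf : QTerm.WFQ t) (hcl : QTerm.ClosedQ t) :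
    Lam.fv (readbackW t) = ∅ := by
  induction hwf with
  | var => cases hcl
  | app hu hv ihu ihv =>
      cases hcl with
      | app hu' hv' => simp [readbackW_app, Lam.fv, ihu hu', ihv hv']
  | capp hu hv ihu ihv =>
      cases hcl with
      | capp hu' hv' => simp [readbackW_capp, Lam.fv, ihu hu', ihv hv']
  | @con x M ts hlen hts ih =>
      have hcl' : ∀ t ∈ ts, QTerm.ClosedQ t := by cases hcl with | con h => exact h
      rw [readbackW_con]
      rw [Finset.eq_empty_iff_forall_notMem]
      intro w hw
      obtain ⟨z, hz, hw'⟩ := Lam.mem_fv_msubst hw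
      have hzl : z ∈ Lam.fvList (.lam x M) := Lam.mem_fvList.2 hz
      obtain ⟨w', hw'mem, hlk⟩ := lookup_zip_mem (ws := ts.map readbackW) hzl
        (by simp [hlen])
      rw [show Lam.substOf (Lam.fvList (.lam x M)) (ts.map readbackW) z
          = some w' from hlk] at hw'
      simp only [Option.getD_some] at hw'
      obtain ⟨t', ht', rfl⟩ := List.mem_map.1 hw'mem
      rw [ih t' ht' (hcl' t' ht')] at hw'
      simp at hw'

lemma countApp_app (u v : QTerm) :
    QTerm.countApp (.app u v) = QTerm.countApp u + QTerm.countApp v + 1 := by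
  rw [QTerm.countApp]

lemma not_mem_fvList_self (y : ℕ) (P : Lam) : y ∉ Lam.fvList (.lam y P) := by
  rw [Lam.mem_fvList]
  simp [Lam.fv]

lemma beta_readback {y : ℕ} {P : Lam} {ts : List QTerm} {v : QTerm}
    (hfvts : ∀ t ∈ ts, Lam.fv (readbackW t) = ∅)
    (hlen : ts.length = (Lam.fvList (.lam y P)).length) :
    readbackW (QTerm.qsubst
        (QTerm.substOfQ (Lam.fvList (.lam y P) ++ [y]) (ts ++ [v])) (transW P)) =
      Lam.subst (Lam.msubst P (fun z => if z = y then none else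
        Lam.substOf (Lam.fvList (.lam y P)) (ts.map readbackW) z)) y (readbackW v) := by
  set xs := Lam.fvList (.lam y P) with hxs
  have hyxs : y ∉ xs := not_mem_fvList_self y P
  rw [readback_qsubst_transW]
  rw [Lam.subst_msubst (fun z t h => ?hcl) (by simp)]
  case hcl =>
    by_cases hzy : z = y
    · simp [hzy] at h
    · simp only [if_neg hzy, Lam.substOf] at h
      have := lookup_zip_mem_of_eq h
      obtain ⟨t', ht', rfl⟩ := List.mem_map.1 this
      exact hfvts t' ht'
  refine Lam.msubst_congr (fun z hz => ?_)
  have hzip : (xs ++ [y]).zip (ts ++ [v]) = xs.zip ts ++ [(y, v)] := by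
    rw [List.zip_append hlen.symm]; rfl
  by_cases hzy : z = y
  · subst hzy
    have h1 : (xs.zip ts).lookup z = none := lookup_zip_none ts hyxs
    simp [QTerm.substOfQ, hzip, lookup_append, h1, List.lookup_cons]
  · have hzxs : z ∈ xs := by
      rw [hxs, Lam.mem_fvList]
      simp [Lam.fv, hz, hzy]
    obtain ⟨w, hwmem, hlk⟩ := lookup_zip_mem (ws := ts) hzxs hlen.symm
    simp [QTerm.substOfQ, hzip, lookup_append, hlk, hzy, Lam.substOf,
      lookup_zip_map]


theorem cbnStep_lift_aux {M N : Lam} (hstep : CbnStep M N) :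
    ∀ t : QTerm, QTerm.WFQ t → QTerm.ClosedQ t → QTerm.CanonicalQ t → readbackW t = M →
      ∃ u : QTerm, PsiStep t u ∧ readbackW u = N ∧
        QTerm.countApp t ≤ QTerm.countApp u + 1 := by
  induction hstep with
  | @beta x M₀ N₀ =>
      intro t hwf hcl hcan hrb
      cases hcan with
      | con hts => rw [readbackW_con] at hrb; simp [Lam.msubst] at hrb
      | @app u v hcanu hconv =>
          rw [readbackW_app] at hrb
          injection hrb with hrbu hrbv
          cases hwf with
          | app hwu hwv =>
          cases hcl with
          | app hclu hclv =>
          cases hcanu with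
          | app hc1 hc2 => rw [readbackW_app] at hrbu; exact absurd hrbu (by simp)
          | @con y P tsu htsu =>
              rw [readbackW_con] at hrbu
              simp only [Lam.msubst] at hrbu
              injection hrbu with hxy hbody
              subst hxy
              subst hrbv
              cases hwu with
              | con hlen hwts =>
              have hclts : ∀ s ∈ tsu, QTerm.ClosedQ s := by
                cases hclu with | con h => exact h
              have hcount : QTerm.countApp (QTerm.app (.con y P tsu) v) = 1 := by
                rw [countApp_app, QTerm.countApp_con,
                  QTerm.countApp_conterm hconv,
                  List.sum_eq_zero (by
                    intro n hn
                    obtain ⟨s, hs, rfl⟩ := List.mem_map.1 hn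
                    exact QTerm.countApp_conterm (htsu s hs))]
              by_cases hPvar : ∃ z, P = Lam.var z
              · obtain ⟨z, rfl⟩ := hPvar
                by_cases hzy : z = y
                · -- identity combinator case
                  subst hzy
                  have hxs : Lam.fvList (.lam z (.var z)) = [] := by
                    rw [Lam.fvList]
                    rw [show Lam.fv (.lam z (.var z)) = ∅ by simp [Lam.fv]]
                    simp
                  rw [hxs] at hlen
                  obtain rfl : tsu = [] := List.length_eq_zero_iff.1 (by simpa using hlen)
                  have hM₀ : M₀ = Lam.var z := by
                    rw [← hbody]; simp [Lam.msubst]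
                  have hgoal : Lam.subst M₀ z (readbackW v) = readbackW v := by
                    rw [hM₀]; simp [Lam.subst]
                  cases hconv with
                  | @capp w f hw hf =>
                      refine ⟨.app w f, PsiStep.id_capp hw hf, ?_, ?_⟩
                      · rw [readbackW_app, ← readbackW_capp, hgoal]
                      · rw [hcount]; omega
                  | @con x' M' ts' hts' =>
                      have hlen' : ts'.length = (Lam.fvList (.lam x' M')).length := by
                        cases hwv with | con h _ => exact h
                      refine ⟨.con x' M' ts', PsiStep.id_con hts' hlen', ?_, ?_⟩
                      · rw [hgoal]
                      · rw [hcount]; omega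
                · -- projection case
                  have hxs : Lam.fvList (.lam y (.var z)) = [z] := by
                    rw [Lam.fvList]
                    rw [show Lam.fv (.lam y (.var z)) = {z} by
                      ext w
                      simp only [Lam.fv, Finset.mem_sdiff, Finset.mem_singleton]
                      constructor
                      · rintro ⟨h, -⟩; exact h
                      · rintro rfl; exact ⟨rfl, hzy⟩]
                    exact Finset.sort_singleton _ z
                  rw [hxs] at hlen
                  obtain ⟨t₀, rfl⟩ := List.length_eq_one_iff.1 (by simpa using hlen)
                  have hwt₀ : QTerm.WFQ t₀ := hwts t₀ (by simp)
                  have hclt₀ : QTerm.ClosedQ t₀ := hclts t₀ (by simp)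
                  have hM₀ : M₀ = readbackW t₀ := by
                    rw [← hbody]
                    simp [Lam.msubst, Lam.substOf, hzy, List.lookup_cons, hxs]
                  have hgoal : Lam.subst M₀ y (readbackW v) = readbackW t₀ := by
                    rw [hM₀]
                    exact Lam.subst_not_mem
                      (by rw [fv_readback_eq_empty hwt₀ hclt₀]; simp) _
                  cases htsu t₀ (by simp) with
                  | @capp f g hf hg =>
                      refine ⟨.app f g, PsiStep.proj_capp hzy hf hg hconv, ?_, ?_⟩
                      · rw [readbackW_app, ← readbackW_capp, hgoal]
                      · rw [hcount]; omega
                  | @con x' M' ts' hts' =>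
                      have hlen' : ts'.length = (Lam.fvList (.lam x' M')).length := by
                        cases hwt₀ with | con h _ => exact h
                      refine ⟨.con x' M' ts', PsiStep.proj_con hzy hts' hlen' hconv, ?_, ?_⟩
                      · rw [hgoal]
                      · rw [hcount]; omega
              · -- genuine beta case
                have hNvar : ∀ z, P ≠ Lam.var z := fun z h => hPvar ⟨z, h⟩
                refine ⟨_, PsiStep.beta hNvar htsu hconv hlen, ?_, ?_⟩
                · rw [beta_readback
                    (fun s hs => fv_readback_eq_empty (hwts s hs) (hclts s hs)) hlen,
                    hbody]
                · rw [hcount]; omega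
  | @appL M₁ M₁' L hstep ih =>
      intro t hwf hcl hcan hrb
      cases hcan with
      | con hts => rw [readbackW_con] at hrb; simp [Lam.msubst] at hrb
      | @app u v hcanu hconv =>
          rw [readbackW_app] at hrb
          injection hrb with hrbu hrbv
          cases hwf with
          | app hwu hwv =>
          cases hcl with
          | app hclu hclv =>
          obtain ⟨u', hpsi, hrb', hcount⟩ := ih u hwu hclu hcanu hrbu
          refine ⟨.app u' v, PsiStep.appL hpsi, ?_, ?_⟩
          · rw [readbackW_app, hrb', hrbv]
          · rw [countApp_app, countApp_app]; omega


/-- If M →h N, t is a canonical closed Ψ-term and ⟦t⟧_w = M, then t rewrites in one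
step in Ψ to a term u with ⟦u⟧_w = N and #app(u) + 1 ≥ #app(t). -/
theorem cbnStep_lift (M N : Lam) (t : QTerm)
    (hwf : QTerm.WFQ t) (hcl : QTerm.ClosedQ t) (hcan : QTerm.CanonicalQ t)
    (hstep : CbnStep M N) (hrb : readbackW t = M) :
    ∃ u : QTerm, PsiStep t u ∧ readbackW u = N ∧
      QTerm.countApp t ≤ QTerm.countApp u + 1 :=
  cbnStep_lift_aux hstep t hwf hcl hcan hrb
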